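/- For fractionally integrated noise F(d) with d ∈ (0,1/2) and all integers 1 ≤ j ≤ k: the Yule–Walker AR(k) coefficient satisfies the product identity a_{j,k} = a_j · ∏_{m=0}^{j−1} (k−m)/(k−d−m), and consequently a_j − a_{j,k} > 0 (i.e. a_{j,k} < a_j < 0). -/

import Mathlib

open scoped BigOperators

/-- AR(∞) coefficients of fractionally integrated noise F(d):
`a_j = Γ(j-d)/(Γ(j+1)Γ(-d))` for `j ≥ 1` (and `a_0 = 1`). -/
noncomputable def fiAR (d : ℝ) (j : ℕ) : ℝ :=
  if j = 0 then 1
  else Real.Gamma ((j : ℝ) - d) / (Real.Gamma ((j : ℝ) + 1) * Real.Gamma (-d))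

/-- Signed Yule–Walker AR(k) coefficients of F(d), for `1 ≤ j ≤ k`:
`a_{j,k} = Γ(k+1)Γ(j-d)Γ(k-d-j+1)/(Γ(k-j+1)Γ(j+1)Γ(-d)Γ(k-d+1))`. -/
noncomputable def fiYW (d : ℝ) (j k : ℕ) : ℝ :=
  Real.Gamma ((k : ℝ) + 1) * Real.Gamma ((j : ℝ) - d) * Real.Gamma ((k : ℝ) - d - (j : ℝ) + 1) /
    (Real.Gamma ((k : ℝ) - (j : ℝ) + 1) * Real.Gamma ((j : ℝ) + 1) * Real.Gamma (-d) *
      Real.Gamma ((k : ℝ) - d + 1))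

lemma gamma_shift (x : ℝ) (j : ℕ) (h : ∀ m ∈ Finset.range j, x - m ≠ 0) :
    Real.Gamma (x + 1) = (∏ m ∈ Finset.range j, (x - m)) * Real.Gamma (x - j + 1) := by
  induction j with
  | zero => simp
  | succ n ih =>
    have hn : ∀ m ∈ Finset.range n, x - m ≠ 0 := fun m hm =>
      h m (Finset.mem_range.mpr (Nat.lt_succ_of_lt (Finset.mem_range.mp hm)))
    have hx : x - n ≠ 0 := h n (Finset.mem_range.mpr (Nat.lt_succ_self n))
    have key : Real.Gamma (x - n + 1) = (x - n) * Real.Gamma (x - (n + 1) + 1) := by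
      have := Real.Gamma_add_one hx
      rw [this]
      ring_nf
    rw [ih hn, key, Finset.prod_range_succ]
    push_cast
    ring

/-- for F(d) with `d ∈ (0,1/2)` and `1 ≤ j ≤ k`,
`a_{j,k} = a_j ∏_{m=0}^{j-1} (k-m)/(k-d-m)`, and consequently `a_{j,k} < a_j < 0`. -/
theorem fiYW_product_identity_and_sign
    (d : ℝ) (hd : 0 < d) (hd' : d < 1 / 2)
    (j k : ℕ) (hj : 1 ≤ j) (hjk : j ≤ k) :
    fiYW d j k = fiAR d j * ∏ m ∈ Finset.range j, (((k : ℝ) - m) / ((k : ℝ) - d - m)) ∧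
    fiYW d j k < fiAR d j ∧ fiAR d j < 0 := by
  have hj0 : j ≠ 0 := Nat.one_le_iff_ne_zero.mp hj
  have hd1 : d < 1 := hd'.trans (by norm_num)
  -- positivity of each (k - d - m) and (k - m) for m < j
  have hfac : ∀ m ∈ Finset.range j, 0 < (k : ℝ) - d - m := by
    intro m hm
    have hmk : m < k := lt_of_lt_of_le (Finset.mem_range.mp hm) hjk
    have : (m : ℝ) + 1 ≤ (k : ℝ) := by exact_mod_cast hmk
    linarith
  have hfac' : ∀ m ∈ Finset.range j, 0 < (k : ℝ) - m := by
    intro m hm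
    have := hfac m hm; linarith
  -- Gamma expansions
  have h1 : Real.Gamma ((k : ℝ) + 1)
      = (∏ m ∈ Finset.range j, ((k : ℝ) - m)) * Real.Gamma ((k : ℝ) - j + 1) :=
    gamma_shift (k : ℝ) j (fun m hm => ne_of_gt (hfac' m hm))
  have h2 : Real.Gamma ((k : ℝ) - d + 1)
      = (∏ m ∈ Finset.range j, ((k : ℝ) - d - m)) * Real.Gamma ((k : ℝ) - d - j + 1) := by
    have := gamma_shift ((k : ℝ) - d) j (fun m hm => ne_of_gt (by
      have := hfac m hm; linarith))
    convert this using 3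
  -- positivity / nonvanishing facts
  have hGkj : 0 < Real.Gamma ((k : ℝ) - j + 1) := by
    apply Real.Gamma_pos_of_pos
    have : (j : ℝ) ≤ (k : ℝ) := by exact_mod_cast hjk
    linarith
  have hGkdj : 0 < Real.Gamma ((k : ℝ) - d - j + 1) := by
    apply Real.Gamma_pos_of_pos
    have : (j : ℝ) ≤ (k : ℝ) := by exact_mod_cast hjk
    linarith
  have hGjd : 0 < Real.Gamma ((j : ℝ) - d) := by
    apply Real.Gamma_pos_of_pos
    have : (1 : ℝ) ≤ (j : ℝ) := by exact_mod_cast hj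
    linarith
  have hGj1 : 0 < Real.Gamma ((j : ℝ) + 1) := by
    apply Real.Gamma_pos_of_pos; positivity
  have hGnd : Real.Gamma (-d) < 0 := by
    have h1d : 0 < Real.Gamma (1 - d) := Real.Gamma_pos_of_pos (by linarith)
    have := Real.Gamma_add_one (s := -d) (by linarith)
    have heq : Real.Gamma (1 - d) = -d * Real.Gamma (-d) := by
      rw [← this]; ring_nf
    nlinarith
  have hQpos : 0 < ∏ m ∈ Finset.range j, ((k : ℝ) - d - m) := Finset.prod_pos hfac
  -- product identity
  have hprod : fiYW d j k = fiAR d j * ∏ m ∈ Finset.range j, (((k : ℝ) - m) / ((k : ℝ) - d - m)) := by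
    rw [Finset.prod_div_distrib]
    unfold fiYW fiAR
    rw [if_neg hj0, h1, h2]
    field_simp [hGkj.ne', hGkdj.ne', hGj1.ne', hGnd.ne, hQpos.ne']
  refine ⟨hprod, ?_, ?_⟩
  · -- fiYW < fiAR
    have hARneg : fiAR d j < 0 := by
      unfold fiAR
      rw [if_neg hj0]
      apply div_neg_of_pos_of_neg hGjd
      exact mul_neg_of_pos_of_neg hGj1 hGnd
    have hP1 : 1 < ∏ m ∈ Finset.range j, (((k : ℝ) - m) / ((k : ℝ) - d - m)) := by
      have hne : (Finset.range j).Nonempty := Finset.nonempty_range_iff.mpr hj0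
      rw [Finset.prod_div_distrib, lt_div_iff₀ hQpos, one_mul]
      refine Finset.prod_lt_prod_of_nonempty hfac ?_ hne
      intro m hm
      have := hfac m hm
      linarith
    rw [hprod]
    nlinarith
  · unfold fiAR
    rw [if_neg hj0]
    apply div_neg_of_pos_of_neg hGjd
    exact mul_neg_of_pos_of_neg hGj1 hGnd
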